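/- The tropical semiring N_min = (N ∪ {+∞}, min, +) is separated by morphisms of finite image: for every γ ∈ N ∪ {+∞}, there is a finite semiring S_γ and a semiring morphism π_γ : N_min → S_γ with π_γ^{-1}(π_γ(γ)) = {γ}. Specifically, choosing any natural number m with m > γ when γ ∈ N (or m = 1 when γ = +∞), the relation identifying all natural numbers ≥ m (and keeping +∞ separate) is a semiring congruence on N_min, the quotient is finite, and the quotient map separates γ. -/

import Mathlib

open Tropical


def R (m : ℕ) (a b : WithTop ℕ) : Prop :=
  a = b ∨ ∃ j k : ℕ, m ≤ j ∧ m ≤ k ∧ a = (j : WithTop ℕ) ∧ b = (k : WithTop ℕ)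

lemma rep (a : WithTop ℕ) : a = ⊤ ∨ ∃ n : ℕ, a = (n : WithTop ℕ) := by
  cases a with
  | top => exact Or.inl rfl
  | coe n => exact Or.inr ⟨n, by norm_cast⟩

variable {m : ℕ}

lemma R_trans {a b c} (h1 : R m a b) (h2 : R m b c) : R m a c := by
  rcases h1 with rfl | ⟨j, k, hj, hk, rfl, rfl⟩
  · exact h2
  · rcases h2 with rfl | ⟨j', k', hj', hk', he, rfl⟩
    · exact Or.inr ⟨j, k, hj, hk, rfl, rfl⟩
    · exact Or.inr ⟨j, k', hj, hk', rfl, rfl⟩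

lemma R_min {a b c d} (h1 : R m a b) (h2 : R m c d) : R m (min a c) (min b d) := by
  rcases h1 with rfl | ⟨j, k, hj, hk, rfl, rfl⟩
  · rcases h2 with rfl | ⟨j, k, hj, hk, rfl, rfl⟩
    · exact Or.inl rfl
    · rcases rep a with rfl | ⟨n, rfl⟩
      · rw [min_eq_right (le_top (a := (j : WithTop ℕ))),
          min_eq_right (le_top (a := (k : WithTop ℕ)))]
        exact Or.inr ⟨j, k, hj, hk, rfl, rfl⟩
      · rcases lt_or_ge n m with hn | hn
        · left
          rw [min_eq_left (by exact_mod_cast (hn.trans_le hj).le),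
            min_eq_left (by exact_mod_cast (hn.trans_le hk).le)]
        · right
          exact ⟨min n j, min n k, le_min hn hj, le_min hn hk,
            by exact_mod_cast rfl, by exact_mod_cast rfl⟩
  · rcases h2 with rfl | ⟨j', k', hj', hk', rfl, rfl⟩
    · rcases rep c with rfl | ⟨n, rfl⟩
      · rw [min_eq_left (le_top (a := (j : WithTop ℕ))),
          min_eq_left (le_top (a := (k : WithTop ℕ)))]
        exact Or.inr ⟨j, k, hj, hk, rfl, rfl⟩
      · rcases lt_or_ge n m with hn | hn
        · left
          rw [min_eq_right (by exact_mod_cast (hn.trans_le hj).le),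
            min_eq_right (by exact_mod_cast (hn.trans_le hk).le)]
        · right
          exact ⟨min j n, min k n, le_min hj hn, le_min hk hn,
            by exact_mod_cast rfl, by exact_mod_cast rfl⟩
    · right
      exact ⟨min j j', min k k', le_min hj hj', le_min hk hk',
        by exact_mod_cast rfl, by exact_mod_cast rfl⟩

lemma R_add {a b c d} (h1 : R m a b) (h2 : R m c d) : R m (a + c) (b + d) := by
  rcases h1 with rfl | ⟨j, k, hj, hk, rfl, rfl⟩
  · rcases h2 with rfl | ⟨j, k, hj, hk, rfl, rfl⟩
    · exact Or.inl rfl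
    · rcases rep a with rfl | ⟨n, rfl⟩
      · left; simp
      · right
        exact ⟨n + j, n + k, by omega, by omega, by push_cast; rfl, by push_cast; rfl⟩
  · rcases h2 with rfl | ⟨j', k', hj', hk', rfl, rfl⟩
    · rcases rep c with rfl | ⟨n, rfl⟩
      · left; simp
      · right
        exact ⟨j + n, k + n, by omega, by omega, by push_cast; rfl, by push_cast; rfl⟩
    · right
      exact ⟨j + j', k + k', by omega, by omega, by push_cast; rfl, by push_cast; rfl⟩


/-- The tropical semiring `N_min = (ℕ ∪ {+∞}, min, +)` is separated by
morphisms of finite image. Specifically: given `γ` and a natural number `m`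
with `m > γ` when `γ` is a natural number (or `m = 1` when `γ = +∞`), the
relation identifying all the natural numbers `≥ m` (and keeping `+∞` separate)
is a semiring congruence on `N_min`, its quotient is finite, and the quotient
morphism separates `γ`. -/
theorem tropical_separated (γ : Tropical (WithTop ℕ)) (m : ℕ)
    (hm : (∃ k : ℕ, γ = trop (k : WithTop ℕ) ∧ k < m) ∨
      (γ = trop (⊤ : WithTop ℕ) ∧ m = 1)) :
    ∃ c : RingCon (Tropical (WithTop ℕ)),
      (∀ x y : Tropical (WithTop ℕ),
        c x y ↔ (x = y ∨ ∃ j k : ℕ, m ≤ j ∧ m ≤ k ∧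
          x = trop (j : WithTop ℕ) ∧ y = trop (k : WithTop ℕ))) ∧
      Finite c.Quotient ∧
      (∀ x : Tropical (WithTop ℕ), c x γ → x = γ) := by
  have key : ∀ x y : Tropical (WithTop ℕ),
      R m (untrop x) (untrop y) ↔ (x = y ∨ ∃ j k : ℕ, m ≤ j ∧ m ≤ k ∧
        x = trop (j : WithTop ℕ) ∧ y = trop (k : WithTop ℕ)) := by
    intro x y
    constructor
    · rintro (h | ⟨j, k, hj, hk, hx, hy⟩)
      · exact Or.inl (untrop_injective h)
      · exact Or.inr ⟨j, k, hj, hk, untrop_injective hx, untrop_injective hy⟩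
    · rintro (rfl | ⟨j, k, hj, hk, rfl, rfl⟩)
      · exact Or.inl rfl
      · exact Or.inr ⟨j, k, hj, hk, rfl, rfl⟩
  refine ⟨{ r := fun x y => R m (untrop x) (untrop y)
            iseqv := ⟨fun _ => Or.inl rfl,
              fun h => by
                rcases h with h | ⟨j, k, hj, hk, h1, h2⟩
                · exact Or.inl h.symm
                · exact Or.inr ⟨k, j, hk, hj, h2, h1⟩,
              R_trans⟩
            mul' := fun {w x y z} h1 h2 => by
              simpa only [untrop_mul] using R_add h1 h2
            add' := fun {w x y z} h1 h2 => by
              simpa only [untrop_add] using R_min h1 h2 }, ?_, ?_, ?_⟩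
  · intro x y; exact key x y
  · -- finiteness
    set c : RingCon (Tropical (WithTop ℕ)) :=
      { r := fun x y => R m (untrop x) (untrop y)
        iseqv := ⟨fun _ => Or.inl rfl,
          fun h => by
            rcases h with h | ⟨j, k, hj, hk, h1, h2⟩
            · exact Or.inl h.symm
            · exact Or.inr ⟨k, j, hk, hj, h2, h1⟩,
          R_trans⟩
        mul' := fun {w x y z} h1 h2 => by
          simpa only [untrop_mul] using R_add h1 h2
        add' := fun {w x y z} h1 h2 => by
          simpa only [untrop_add] using R_min h1 h2 } with hc
    classical
    let g : Tropical (WithTop ℕ) → Fin (m + 2) := fun x =>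
      if untrop x = ⊤ then ⟨m + 1, by omega⟩
      else ⟨min (WithTop.untopD 0 (untrop x)) m, by omega⟩
    have hgn : ∀ n : ℕ, g (trop (n : WithTop ℕ)) = ⟨min n m, by omega⟩ := by
      intro n
      simp [g]
      norm_cast
    have hgt : g (trop (⊤ : WithTop ℕ)) = ⟨m + 1, by omega⟩ := by
      simp [g]
    have hwd : ∀ x y : Tropical (WithTop ℕ), c x y → g x = g y := by
      intro x y h
      rcases h with h | ⟨j, k, hj, hk, hx, hy⟩
      · rw [untrop_injective h]
      · have hx' : x = trop (j : WithTop ℕ) := untrop_injective (by simpa using hx)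
        have hy' : y = trop (k : WithTop ℕ) := untrop_injective (by simpa using hy)
        rw [hx', hy', hgn j, hgn k]
        congr 1
        omega
    have hinj : ∀ x y : Tropical (WithTop ℕ), g x = g y → c x y := by
      intro x y h
      rcases rep (untrop x) with hx | ⟨n, hx⟩ <;>
        rcases rep (untrop y) with hy | ⟨n', hy⟩
      · exact Or.inl (hx.trans hy.symm)
      · have hx' : x = trop (⊤ : WithTop ℕ) := untrop_injective (by simpa using hx)
        have hy' : y = trop (n' : WithTop ℕ) := untrop_injective (by simpa using hy)
        rw [hx', hy', hgt, hgn n'] at h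
        have := Fin.val_eq_of_eq h
        simp at this
        omega
      · have hx' : x = trop (n : WithTop ℕ) := untrop_injective (by simpa using hx)
        have hy' : y = trop (⊤ : WithTop ℕ) := untrop_injective (by simpa using hy)
        rw [hx', hy', hgt, hgn n] at h
        have := Fin.val_eq_of_eq h
        simp at this
        omega
      · have hx' : x = trop (n : WithTop ℕ) := untrop_injective (by simpa using hx)
        have hy' : y = trop (n' : WithTop ℕ) := untrop_injective (by simpa using hy)
        rw [hx', hy', hgn n, hgn n'] at h
        have hmin : min n m = min n' m := Fin.val_eq_of_eq h
        rcases (by omega : n = n' ∨ (m ≤ n ∧ m ≤ n')) with rfl | ⟨h1, h2⟩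
        · exact Or.inl (hx.trans hy.symm)
        · exact Or.inr ⟨n, n', h1, h2, hx, hy⟩
    have hfi : Function.Injective
        (Quotient.lift g hwd : c.Quotient → Fin (m + 2)) := by
      intro q1 q2
      refine Quotient.inductionOn₂ q1 q2 ?_
      intro x y h
      exact Quotient.sound (hinj x y h)
    exact Finite.of_injective _ hfi
  · intro x hx
    rcases hx with h | ⟨j, k, hj, hk, hx, hγ⟩
    · exact untrop_injective h
    · rcases hm with ⟨k', hk', hklt⟩ | ⟨hγ', hm1⟩
      · exfalso
        rw [hk', untrop_trop] at hγ
        have : k' = k := by exact_mod_cast hγ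
        omega
      · exfalso
        rw [hγ', untrop_trop] at hγ
        simp at hγ
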